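/- Let α > 1, c > 0, and let (B_j) be a non-decreasing positive sequence with B_k^α ≥ c · Σ_{j=1}^k B_j for all k ≥ 1. Then B_k ≥ ((α−1)/α · c · k)^{1/(α−1)} for all k ≥ 1. -/

import Mathlib

open Real Finset

/-- Key algebraic inequality: `(M+t)^p * (M - p*t) ≤ M^(p+1)` for nonnegative `M, t`. -/
private lemma aux_bern {p M t : ℝ} (hp : 0 < p) (hM : 0 ≤ M) (ht : 0 ≤ t) :
    (M + t) ^ p * (M - p * t) ≤ M ^ (p + 1) := by
  rcases le_or_gt M (p * t) with hMt | hMt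
  · have h1 : (M + t) ^ p * (M - p * t) ≤ 0 :=
      mul_nonpos_of_nonneg_of_nonpos (Real.rpow_nonneg (by linarith) p) (by linarith)
    exact h1.trans (Real.rpow_nonneg hM _)
  · have hM0 : 0 < M := lt_of_le_of_lt (mul_nonneg hp.le ht) hMt
    set s : ℝ := t / M with hs_def
    have hs : 0 ≤ s := div_nonneg ht hM0.le
    have hps : p * s < 1 := by
      rw [hs_def, ← mul_div_assoc, div_lt_one hM0]
      linarith
    have hMt' : M + t = M * (1 + s) := by rw [hs_def]; field_simp
    have hMpt : M - p * t = M * (1 - p * s) := by rw [hs_def]; field_simp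
    have key : (1 + s) ^ p * (1 - p * s) ≤ 1 := by
      rcases le_or_gt p 1 with hp1 | hp1
      · have hb : (1 + s) ^ p ≤ 1 + p * s :=
          rpow_one_add_le_one_add_mul_self (by linarith) hp.le hp1
        calc (1 + s) ^ p * (1 - p * s) ≤ (1 + p * s) * (1 - p * s) :=
              mul_le_mul_of_nonneg_right hb (by linarith)
          _ = 1 - (p * s) ^ 2 := by ring
          _ ≤ 1 := by nlinarith [sq_nonneg (p * s)]
      · have hs1 : s < 1 := by nlinarith
        have hb : (1 + -(p * s)) ^ (1 / p) ≤ 1 + (1 / p) * -(p * s) :=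
          rpow_one_add_le_one_add_mul_self (by linarith) (by positivity)
            (by rw [div_le_one (by linarith)]; linarith)
        have hb' : (1 - p * s) ^ (1 / p) ≤ 1 - s := by
          have h1 : 1 + -(p * s) = 1 - p * s := by ring
          have h2 : 1 + (1 / p) * -(p * s) = 1 - s := by field_simp; ring
          rw [h1, h2] at hb; exact hb
        have h2 : 0 ≤ (1 - p * s) ^ (1 / p) := Real.rpow_nonneg (by linarith) _
        have h3 : (1 + s) * (1 - p * s) ^ (1 / p) ≤ (1 + s) * (1 - s) :=
          mul_le_mul_of_nonneg_left hb' (by linarith)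
        have h4 : ((1 + s) * (1 - p * s) ^ (1 / p)) ^ p ≤ ((1 + s) * (1 - s)) ^ p :=
          Real.rpow_le_rpow (mul_nonneg (by linarith) h2) h3 hp.le
        have h5 : ((1 + s) * (1 - p * s) ^ (1 / p)) ^ p = (1 + s) ^ p * (1 - p * s) := by
          rw [Real.mul_rpow (by linarith) h2, ← Real.rpow_mul (by linarith),
            one_div_mul_cancel (by positivity : p ≠ 0), Real.rpow_one]
        have h6 : ((1 + s) * (1 - s)) ^ p ≤ 1 := by
          calc ((1 + s) * (1 - s)) ^ p ≤ 1 ^ p :=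
                Real.rpow_le_rpow (by nlinarith) (by nlinarith) hp.le
            _ = 1 := Real.one_rpow p
        linarith [h4.trans h6, h5 ▸ (h4.trans h6)]
    calc (M + t) ^ p * (M - p * t)
        = (M ^ p * M) * ((1 + s) ^ p * (1 - p * s)) := by
          rw [hMt', hMpt, Real.mul_rpow hM0.le (by linarith)]; ring
      _ ≤ (M ^ p * M) * 1 := by
          apply mul_le_mul_of_nonneg_left key
          positivity
      _ = M ^ (p + 1) := by rw [Real.rpow_add_one hM0.ne']; ring

/-- Sum bound: `∑_{j=1}^m j^p ≥ m^(p+1)/(p+1)` for `p > 0`. -/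
private lemma aux_sum {p : ℝ} (hp : 0 < p) :
    ∀ m : ℕ, (m : ℝ) ^ (p + 1) / (p + 1) ≤ ∑ j ∈ Finset.Icc 1 m, (j : ℝ) ^ p := by
  intro m
  induction m with
  | zero => simp [Real.zero_rpow (by positivity : p + 1 ≠ 0)]
  | succ n ihn =>
    rw [Finset.sum_Icc_succ_top (by omega : 1 ≤ n + 1)]
    have hp1 : (0 : ℝ) < p + 1 := by linarith
    set a : ℝ := (n : ℝ) + 1 with ha_def
    have ha : (0 : ℝ) < a := by positivity
    have ha1 : (1 : ℝ) ≤ a := by rw [ha_def]; linarith [(Nat.cast_nonneg n : (0:ℝ) ≤ (n:ℝ))]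
    have hinv : 1 / a ≤ 1 := by rw [div_le_one ha]; exact ha1
    have hb : 1 + (p + 1) * -(1 / a) ≤ (1 + -(1 / a)) ^ (p + 1) :=
      one_add_mul_self_le_rpow_one_add (by linarith) (by linarith)
    have hn : (n : ℝ) = a * (1 - 1 / a) := by field_simp; rw [ha_def]; ring
    have key : a ^ (p + 1) ≤ (n : ℝ) ^ (p + 1) + (p + 1) * a ^ p := by
      have h1 : (n : ℝ) ^ (p + 1) = a ^ (p + 1) * (1 - 1 / a) ^ (p + 1) := by
        rw [hn, Real.mul_rpow ha.le (by linarith)]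
      have h2 : a ^ (p + 1) * (1 - (p + 1) / a) ≤ a ^ (p + 1) * (1 - 1 / a) ^ (p + 1) := by
        apply mul_le_mul_of_nonneg_left _ (Real.rpow_nonneg ha.le _)
        have heq : (1 : ℝ) + -(1 / a) = 1 - 1 / a := by ring
        have heq2 : 1 + (p + 1) * -(1 / a) = 1 - (p + 1) / a := by ring
        rw [heq, heq2] at hb
        exact hb
      have h3 : a ^ (p + 1) * (1 - (p + 1) / a) = a ^ (p + 1) - (p + 1) * a ^ p := by
        rw [Real.rpow_add_one ha.ne']
        field_simp
      rw [h1]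
      linarith [h3 ▸ h2]
    have hcast : ((n + 1 : ℕ) : ℝ) = a := by push_cast [ha_def]; ring
    rw [hcast]
    calc a ^ (p + 1) / (p + 1) ≤ ((n : ℝ) ^ (p + 1) + (p + 1) * a ^ p) / (p + 1) := by
          gcongr
      _ = (n : ℝ) ^ (p + 1) / (p + 1) + a ^ p := by
          rw [add_div, mul_comm (p + 1) (a ^ p), mul_div_assoc, div_self hp1.ne', mul_one]
      _ ≤ (∑ j ∈ Finset.Icc 1 n, (j : ℝ) ^ p) + a ^ p := by linarith

/-- A positive non-decreasing sequence with `B k ^ α ≥ c * ∑_{j=1}^k B j` satisfies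
`B k ≥ ((α-1)/α * c * k)^(1/(α-1))`. -/
theorem recursion_lemma (α c : ℝ) (hα : 1 < α) (hc : 0 < c) (B : ℕ → ℝ)
    (hpos : ∀ k, 1 ≤ k → 0 < B k)
    (hmono : ∀ j k, 1 ≤ j → j ≤ k → B j ≤ B k)
    (hrec : ∀ k, 1 ≤ k → (B k) ^ α ≥ c * ∑ j ∈ Finset.Icc 1 k, B j) :
    ∀ k : ℕ, 1 ≤ k → B k ≥ ((α - 1) / α * c * k) ^ (1 / (α - 1)) := by
  have hα0 : (0 : ℝ) < α - 1 := by linarith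
  have hαpos : (0 : ℝ) < α := by linarith
  set p : ℝ := 1 / (α - 1) with hp_def
  set β : ℝ := (α - 1) / α with hβ_def
  have hp : 0 < p := by positivity
  have hβ : 0 < β := div_pos hα0 hαpos
  have hpα : (α - 1) * p = 1 := by rw [hp_def]; field_simp
  have hβp : β * (p + 1) = 1 := by rw [hp_def, hβ_def]; field_simp; ring
  have hβeq : β = 1 / (p + 1) := by rw [hp_def, hβ_def]; field_simp; ring
  have hctβ : c = β * c + p * (β * c) := by rw [hp_def, hβ_def]; field_simp; ring
  intro k
  induction k using Nat.strong_induction_on with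
  | _ k ih =>
    intro hk
    obtain ⟨m, rfl⟩ : ∃ m, k = m + 1 := ⟨k - 1, by omega⟩
    have hx : 0 < B (m + 1) := hpos _ (by omega)
    have hβc : (0 : ℝ) < β * c := by positivity
    -- sum lower bound
    have hsum : (β * c) ^ (p + 1) * (m : ℝ) ^ (p + 1) + c * B (m + 1)
        ≤ c * ∑ j ∈ Finset.Icc 1 (m + 1), B j := by
      rw [Finset.sum_Icc_succ_top (by omega : 1 ≤ m + 1)]
      have h1 : ∀ j ∈ Finset.Icc 1 m, (β * c) ^ p * (j : ℝ) ^ p ≤ B j := by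
        intro j hj
        simp only [Finset.mem_Icc] at hj
        have hbj := ih j (by omega) hj.1
        calc (β * c) ^ p * (j : ℝ) ^ p = (β * c * (j : ℝ)) ^ p :=
              (Real.mul_rpow hβc.le (by positivity)).symm
          _ ≤ B j := hbj
      have h2 : (β * c) ^ p * ((m : ℝ) ^ (p + 1) / (p + 1)) ≤ ∑ j ∈ Finset.Icc 1 m, B j := by
        calc (β * c) ^ p * ((m : ℝ) ^ (p + 1) / (p + 1))
            ≤ (β * c) ^ p * ∑ j ∈ Finset.Icc 1 m, (j : ℝ) ^ p := by
              have := aux_sum hp m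
              apply mul_le_mul_of_nonneg_left this (Real.rpow_nonneg hβc.le _)
          _ = ∑ j ∈ Finset.Icc 1 m, (β * c) ^ p * (j : ℝ) ^ p := Finset.mul_sum _ _ _
          _ ≤ ∑ j ∈ Finset.Icc 1 m, B j := Finset.sum_le_sum h1
      have h3 : (β * c) ^ (p + 1) * (m : ℝ) ^ (p + 1)
          = c * ((β * c) ^ p * ((m : ℝ) ^ (p + 1) / (p + 1))) := by
        have hpone : (0 : ℝ) < p + 1 := by linarith
        rw [Real.rpow_add_one hβc.ne']
        have hdiv : (m : ℝ) ^ (p + 1) / (p + 1) = β * (m : ℝ) ^ (p + 1) := by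
          rw [hβeq]; ring
        rw [hdiv]
        ring
      have h4 := mul_le_mul_of_nonneg_left h2 hc.le
      rw [mul_add]
      linarith
    have hrec' := hrec (m + 1) (by omega)
    have E : (β * c) ^ (p + 1) * (m : ℝ) ^ (p + 1) + c * B (m + 1) ≤ B (m + 1) ^ α :=
      le_trans hsum hrec'
    set x := B (m + 1) with hx_def
    have hxα : x ^ α = x * x ^ (α - 1) := by
      have h : x ^ α = x ^ (1 + (α - 1)) := by ring_nf
      rw [h, Real.rpow_add hx, Real.rpow_one]
    set y := x ^ (α - 1) with hy_def
    have hy : 0 < y := Real.rpow_pos_of_pos hx _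
    have hxy : x = y ^ p := by
      rw [hy_def, ← Real.rpow_mul hx.le, hpα, Real.rpow_one]
    have claim : β * c * ((m + 1 : ℕ) : ℝ) ≤ y := by
      by_contra hlt
      push_neg at hlt
      have hcast : ((m + 1 : ℕ) : ℝ) = (m : ℝ) + 1 := by push_cast; ring
      set M := β * c * (m : ℝ) with hM_def
      set t := β * c with ht_def
      have hMt : β * c * ((m + 1 : ℕ) : ℝ) = M + t := by rw [hcast]; ring
      rw [hMt] at hlt
      have hM : 0 ≤ M := by positivity
      have ht : 0 ≤ t := hβc.le
      have hMp : M ^ (p + 1) = t ^ (p + 1) * (m : ℝ) ^ (p + 1) := by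
        rw [hM_def, mul_comm (β * c) (m : ℝ), Real.mul_rpow (by positivity) ht]
        ring
      have E2 : c * x + M ^ (p + 1) ≤ x * y := by
        rw [hMp]
        rw [hxα] at E
        linarith
      have h5 : x * y < x * (M + t) := mul_lt_mul_of_pos_left hlt hx
      have h6 : M ^ (p + 1) < x * (M - p * t) := by nlinarith [hctβ]
      have h7 : 0 < M - p * t := by
        by_contra h
        push_neg at h
        have h8 : x * (M - p * t) ≤ 0 := mul_nonpos_of_nonneg_of_nonpos hx.le h
        have h9 : (0 : ℝ) ≤ M ^ (p + 1) := Real.rpow_nonneg hM _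
        linarith
      have h8 : x < (M + t) ^ p := by
        rw [hxy]
        exact Real.rpow_lt_rpow hy.le hlt hp
      have h9 : M ^ (p + 1) < (M + t) ^ p * (M - p * t) :=
        h6.trans_le (mul_le_mul_of_nonneg_right h8.le h7.le)
      linarith [aux_bern hp hM ht]
    calc (β * c * ((m + 1 : ℕ) : ℝ)) ^ p ≤ y ^ p :=
          Real.rpow_le_rpow (by positivity) claim hp.le
      _ = x := hxy.symm
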